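/- Let R be a commutative noetherian Jacobson ring and let H be an associative unital R-algebra (not necessarily commutative) such that the center Z of H is a finitely generated R-algebra and H is a finitely generated module over Z. Then every simple left H-module M is finitely generated as an R-module. -/

import Mathlib

set_option synthInstance.maxHeartbeats 400000
set_option maxHeartbeats 800000


/-- Let `R` be a commutative noetherian Jacobson ring and let `H` be an associative unital
`R`-algebra (not necessarily commutative) such that the center `Z` of `H` is a finitely
generated `R`-algebra and `H` is a finitely generated module over `Z`. Then every simple
left `H`-module `M` is finitely generated as an `R`-module. -/
theorem simple_module_finite_of_center_finiteType
    (R : Type*) [CommRing R] [IsNoetherianRing R] [IsJacobsonRing R]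
    (H : Type*) [Ring H] [Algebra R H]
    (hZ : Algebra.FiniteType R (Subalgebra.center R H))
    (hH : Module.Finite (Subalgebra.center R H) H)
    (M : Type*) [AddCommGroup M] [Module H M] [Module R M] [IsScalarTower R H M]
    [IsSimpleModule H M] :
    Module.Finite R M := by
  set Z := Subalgebra.center R H with hZdef
  haveI : Nontrivial M := IsSimpleModule.nontrivial H M
  -- `M` is finitely generated (indeed cyclic) over `H`.
  have hMH : Module.Finite H M := by
    obtain ⟨m, hm⟩ := exists_ne (0 : M)
    have htop : Submodule.span H {m} = ⊤ := by
      rcases eq_bot_or_eq_top (Submodule.span H {m}) with h | h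
      · exact absurd (h ▸ Submodule.mem_span_singleton_self m) (by simp [hm])
      · exact h
    exact ⟨⟨{m}, by simpa using htop⟩⟩
  -- hence finitely generated over the center `Z`.
  have hMZ : Module.Finite Z M := Module.Finite.trans H M
  -- every central element not in the annihilator acts bijectively on `M`.
  have key : ∀ z : Z, z ∉ Module.annihilator Z M → Function.Surjective (fun m : M => z • m) := by
    intro z hz
    set f : M →ₗ[H] M :=
      { toFun := fun m => z • m
        map_add' := fun a b => smul_add z a b
        map_smul' := by
          intro h m
          simp only [RingHom.id_apply, Subalgebra.smul_def]
          rw [← mul_smul, ← mul_smul, (Subalgebra.mem_center_iff.mp z.2 h)] } with hf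
    have hker : LinearMap.ker f = ⊥ ∨ LinearMap.ker f = ⊤ := eq_bot_or_eq_top _
    have hrange : LinearMap.range f = ⊥ ∨ LinearMap.range f = ⊤ := eq_bot_or_eq_top _
    have hne : LinearMap.range f ≠ ⊥ := by
      intro h0
      apply hz
      rw [Module.mem_annihilator]
      intro m
      have : f m ∈ LinearMap.range f := LinearMap.mem_range_self f m
      rw [h0, Submodule.mem_bot] at this
      exact this
    have hrt : LinearMap.range f = ⊤ := hrange.resolve_left hne
    intro m
    obtain ⟨m', hm'⟩ := LinearMap.range_eq_top.mp hrt m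
    exact ⟨m', hm'⟩
  set q : Ideal Z := Module.annihilator Z M with hq
  -- the annihilator of `M` in `Z` is a maximal ideal (Nakayama argument).
  have hmax : q.IsMaximal := by
    rw [Ideal.isMaximal_iff]
    constructor
    · intro h1
      obtain ⟨m, hm⟩ := exists_ne (0 : M)
      exact hm (by simpa using Module.mem_annihilator.mp h1 m)
    · intro J x hqJ hxq hxJ
      have hsurj := key x hxq
      have hle : (⊤ : Submodule Z M) ≤ (Ideal.span {x}) • (⊤ : Submodule Z M) := by
        intro m _
        obtain ⟨m', hm'⟩ := hsurj m
        rw [← hm']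
        exact Submodule.smul_mem_smul (Ideal.subset_span rfl) trivial
      obtain ⟨r, hr1, hr2⟩ :=
        Submodule.exists_sub_one_mem_and_smul_eq_zero_of_fg_of_le_smul (Ideal.span {x})
          (⊤ : Submodule Z M) (Module.Finite.fg_top) hle
      have hrq : r ∈ q := Module.mem_annihilator.mpr fun m => hr2 m trivial
      have h1 : (1 : Z) = r - (r - 1) := (sub_sub_cancel r 1).symm
      rw [h1]
      exact J.sub_mem (hqJ hrq)
        (Ideal.span_le.mpr (by simpa using hxJ) hr1)
  haveI := hmax
  -- `Z ⧸ q` is a field, finitely generated over the Jacobson ring `R`, hence module-finite.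
  letI : Field (Z ⧸ q) := Ideal.Quotient.field q
  haveI : Algebra.FiniteType R (Z ⧸ q) :=
    (haveI := hZ; Algebra.FiniteType.of_surjective (Ideal.Quotient.mkₐ R q) (Ideal.Quotient.mkₐ_surjective R q))
  haveI hfinRQ : Module.Finite R (Z ⧸ q) := finite_of_finite_type_of_isJacobsonRing R (Z ⧸ q)
  -- `M` is a module over `Z ⧸ q`, finitely generated.
  letI : Module (Z ⧸ q) M := (Module.isTorsionBySet_annihilator Z M).module
  have hmk : ∀ (y : Z) (m : M), (@id (Z ⧸ q) (Ideal.Quotient.mk q y)) • m = y • m := fun y m =>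
    (Module.isTorsionBySet_annihilator Z M).mk_smul y m
  haveI : IsScalarTower Z (Z ⧸ q) M := by
    refine ⟨fun z w m => ?_⟩
    obtain ⟨y, rfl⟩ : ∃ y : Z, @id (Z ⧸ q) (Ideal.Quotient.mk q y) = w := Ideal.Quotient.mk_surjective w
    have : z • (@id (Z ⧸ q) (Ideal.Quotient.mk q y)) = @id (Z ⧸ q) (Ideal.Quotient.mk q (z * y)) := rfl
    rw [this, hmk, hmk, mul_smul]
  haveI hMQ : Module.Finite (Z ⧸ q) M := Module.Finite.of_restrictScalars_finite Z (Z ⧸ q) M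
  haveI : IsScalarTower R (Z ⧸ q) M := by
    refine ⟨fun r w m => ?_⟩
    obtain ⟨y, rfl⟩ : ∃ y : Z, @id (Z ⧸ q) (Ideal.Quotient.mk q y) = w := Ideal.Quotient.mk_surjective w
    have h1 : r • (@id (Z ⧸ q) (Ideal.Quotient.mk q y)) = @id (Z ⧸ q) (Ideal.Quotient.mk q (r • y)) :=
      (map_smul (Ideal.Quotient.mkₐ R q) r y).symm
    rw [h1, hmk, hmk]
    have h2 : (r • y) • m = ((r • y : Z) : H) • m := Subalgebra.smul_def _ m
    rw [h2]
    have h3 : ((r • y : Z) : H) = algebraMap R H r * (y : H) := by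
      rw [Algebra.smul_def]; rfl
    rw [h3, mul_smul, algebraMap_smul, Subalgebra.smul_def]
  exact Module.Finite.trans (Z ⧸ q) M
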